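/- Let h(z) = −2sc(1 − (z/α)c)/(α((1 − (z/α)c)² + s²)²) with s = sin λ, c = cos λ, α > 0, and define ρ(z) = [[0,0],[h(z),1]] and Λ(z) = [[−μ(z), 0],[h'(z) + 2h(z)μ(z), μ(z)]] where μ(z) = 2((1 − (z/α)c)² − s²)/(αc(1 − z²/α²)((1 − (z/α)c)² + s²)). Then for all z < −α: Tr ρ(z) = 1, ρ(z)² = ρ(z), Tr Λ(z) = 0, and ρ'(z) = [ρ(z), Λ(z)]. -/
import Mathlib


open Matrix Real

attribute [local instance] Matrix.normedAddCommGroup Matrix.normedSpace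

theorem kerr_sources_on_left_semiinfinite_rod
    (α lam : ℝ) (hα : 0 < α) (hlam : lam ∈ Set.Ioo 0 (Real.pi / 2))
    (h μ : ℝ → ℝ)
    (hh : h = fun z => -2 * Real.sin lam * Real.cos lam * (1 - (z / α) * Real.cos lam) /
        (α * ((1 - (z / α) * Real.cos lam) ^ 2 + Real.sin lam ^ 2) ^ 2))
    (hμ : μ = fun z => 2 * ((1 - (z / α) * Real.cos lam) ^ 2 - Real.sin lam ^ 2) /
        (α * Real.cos lam * (1 - z ^ 2 / α ^ 2) *
          ((1 - (z / α) * Real.cos lam) ^ 2 + Real.sin lam ^ 2)))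
    (ρ Λ : ℝ → Matrix (Fin 2) (Fin 2) ℝ)
    (hρ : ρ = fun z => !![0, 0; h z, 1])
    (hΛ : Λ = fun z => !![-μ z, 0; deriv h z + 2 * h z * μ z, μ z]) :
    ∀ z : ℝ, z < -α →
      Matrix.trace (ρ z) = 1 ∧
      ρ z * ρ z = ρ z ∧
      Matrix.trace (Λ z) = 0 ∧
      HasDerivAt ρ (ρ z * Λ z - Λ z * ρ z) z := by
  obtain ⟨hl0, hl1⟩ := hlam
  have hs : Real.sin lam ≠ 0 :=
    ne_of_gt (Real.sin_pos_of_pos_of_lt_pi hl0 (by linarith [Real.pi_pos]))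
  intro z hz
  refine ⟨?_, ?_, ?_, ?_⟩
  · simp [hρ, Matrix.trace_fin_two_of]
  · rw [hρ]
    ext i j
    fin_cases i <;> fin_cases j <;> simp [Matrix.mul_apply, Fin.sum_univ_two]
  · simp [hΛ, Matrix.trace_fin_two_of]
  · have hd : DifferentiableAt ℝ h z := by
      rw [hh]
      apply DifferentiableAt.div (by fun_prop) (by fun_prop)
      positivity
    have hE : HasDerivAt
        (fun w => h w • (!![0,0;1,0] : Matrix (Fin 2) (Fin 2) ℝ) + !![0,0;0,1])
        (deriv h z • (!![0,0;1,0] : Matrix (Fin 2) (Fin 2) ℝ)) z :=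
      (hd.hasDerivAt.smul_const _).add_const _
    have hfun : ρ = fun w => h w • (!![0,0;1,0] : Matrix (Fin 2) (Fin 2) ℝ) + !![0,0;0,1] := by
      rw [hρ]; funext w
      ext i j
      fin_cases i <;> fin_cases j <;> simp
    have hval : ρ z * Λ z - Λ z * ρ z
        = deriv h z • (!![0,0;1,0] : Matrix (Fin 2) (Fin 2) ℝ) := by
      rw [hρ, hΛ]
      ext i j
      fin_cases i <;> fin_cases j <;>
        simp [Matrix.mul_apply, Fin.sum_univ_two] <;> ring
    rw [hval, hfun]
    exact hE
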